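/- Let n₁, n₂ ≥ 2 be integers, m := n₁ + n₂ - 1, and define q : 𝕊^m → ℝ on the unit sphere 𝕊^m ⊂ ℝ^{n₁} × ℝ^{n₂} by q(x, y) := arccos(‖x‖² - ‖y‖²). Then: (i) q is continuous; (ii) the image of q is exactly the interval [0, π]; and (iii) for points (x, y), (x', y') ∈ 𝕊^m one has q(x, y) = q(x', y') if and only if there exist linear isometries γ₁ of ℝ^{n₁} and γ₂ of ℝ^{n₂} with γ₁ x = x' and γ₂ y = y'. Thus q identifies each Γ-orbit in 𝕊^m to a single point of [0, π]. -/

import Mathlib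

/-- The map `q(x, y) = arccos(‖x‖² - ‖y‖²)` on the unit sphere of
`ℝ^{n₁} × ℝ^{n₂}` is continuous, has image exactly `[0, π]`, and two points of
the sphere have the same value of `q` iff they lie in the same
`O(n₁) × O(n₂)`-orbit; thus `q` identifies each orbit to a point of `[0, π]`. -/
theorem stmt9 (n₁ n₂ : ℕ) (h1 : 2 ≤ n₁) (h2 : 2 ≤ n₂)
    (S : Set (EuclideanSpace ℝ (Fin n₁) × EuclideanSpace ℝ (Fin n₂)))
    (hS : S = {p | ‖p.1‖ ^ 2 + ‖p.2‖ ^ 2 = 1})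
    (q : EuclideanSpace ℝ (Fin n₁) × EuclideanSpace ℝ (Fin n₂) → ℝ)
    (hq : ∀ p, q p = Real.arccos (‖p.1‖ ^ 2 - ‖p.2‖ ^ 2)) :
    ContinuousOn q S ∧
    q '' S = Set.Icc 0 Real.pi ∧
    ∀ p ∈ S, ∀ p' ∈ S, (q p = q p' ↔
      ∃ γ₁ : EuclideanSpace ℝ (Fin n₁) ≃ₗᵢ[ℝ] EuclideanSpace ℝ (Fin n₁),
      ∃ γ₂ : EuclideanSpace ℝ (Fin n₂) ≃ₗᵢ[ℝ] EuclideanSpace ℝ (Fin n₂),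
        γ₁ p.1 = p'.1 ∧ γ₂ p.2 = p'.2) := by
  have hqe : q = fun p => Real.arccos (‖p.1‖ ^ 2 - ‖p.2‖ ^ 2) := funext hq
  subst hqe hS
  refine ⟨?_, ?_, ?_⟩
  · exact (Real.continuous_arccos.comp
      (((continuous_fst.norm.pow 2).sub (continuous_snd.norm.pow 2)))).continuousOn
  · apply Set.Subset.antisymm
    · rintro t ⟨p, _, rfl⟩
      exact ⟨Real.arccos_nonneg _, Real.arccos_le_pi _⟩
    · rintro t ⟨ht0, htπ⟩
      set c := Real.cos t with hc
      have hc1 : -1 ≤ c := Real.neg_one_le_cos t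
      have hc2 : c ≤ 1 := Real.cos_le_one t
      set a := Real.sqrt ((1 + c) / 2) with ha
      set b := Real.sqrt ((1 - c) / 2) with hb
      have ha2 : a ^ 2 = (1 + c) / 2 := Real.sq_sqrt (by linarith)
      have hb2 : b ^ 2 = (1 - c) / 2 := Real.sq_sqrt (by linarith)
      refine ⟨(EuclideanSpace.single ⟨0, by omega⟩ a, EuclideanSpace.single ⟨0, by omega⟩ b),
        ?_, ?_⟩
      · simp only [Set.mem_setOf_eq, EuclideanSpace.norm_single, Real.norm_eq_abs, sq_abs]
        linarith
      · simp only [EuclideanSpace.norm_single, Real.norm_eq_abs, sq_abs]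
        have : a ^ 2 - b ^ 2 = c := by linarith
        rw [this, hc, Real.arccos_cos ht0 htπ]
  · intro p hp p' hp'
    simp only [Set.mem_setOf_eq] at hp hp'
    constructor
    · intro h
      have hmem : ‖p.1‖ ^ 2 - ‖p.2‖ ^ 2 ∈ Set.Icc (-1 : ℝ) 1 := by
        constructor <;> nlinarith [norm_nonneg p.1, norm_nonneg p.2, norm_nonneg p'.1,
          norm_nonneg p'.2, sq_nonneg ‖p.1‖, sq_nonneg ‖p.2‖]
      have hmem' : ‖p'.1‖ ^ 2 - ‖p'.2‖ ^ 2 ∈ Set.Icc (-1 : ℝ) 1 := by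
        constructor <;> nlinarith [sq_nonneg ‖p'.1‖, sq_nonneg ‖p'.2‖]
      have heq := Real.arccos_injOn hmem hmem' h
      have h1' : ‖p.1‖ = ‖p'.1‖ := by
        nlinarith [norm_nonneg p.1, norm_nonneg p'.1]
      have h2' : ‖p.2‖ = ‖p'.2‖ := by
        nlinarith [norm_nonneg p.2, norm_nonneg p'.2]
      exact ⟨Submodule.reflection (ℝ ∙ (p.1 - p'.1))ᗮ, Submodule.reflection (ℝ ∙ (p.2 - p'.2))ᗮ,
        Submodule.reflection_sub h1', Submodule.reflection_sub h2'⟩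
    · rintro ⟨γ₁, γ₂, hγ₁, hγ₂⟩
      simp only [← hγ₁, ← hγ₂, LinearIsometryEquiv.norm_map]
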